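/- Let C be a finitely complete category, F an endofunctor of C admitting a final F-coalgebra. For any bisimulation a ←(r_a)− r −(r_b)→ b of F-coalgebras a and b, there exists a unique monomorphism f from the carrier of r into the pullback P of the cospan (carrier a) −⟦a⟧→ (carrier of final) ←⟦b⟧− (carrier b) such that r_a = p_a ∘ f and r_b = p_b ∘ f, where p_a, p_b are the pullback projections and ⟦a⟧, ⟦b⟧ are the anamorphisms. -/

import Mathlib

open CategoryTheory CategoryTheory.Limits

/-- A bisimulation of `F`-coalgebras `a` and `b` is a span of coalgebra morphisms
`a ← r → b` whose underlying span of carriers is jointly monic. -/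
def IsBisimulation {C : Type*} [Category C] {F : C ⥤ C}
    {a b r : Endofunctor.Coalgebra F} (ra : r ⟶ a) (rb : r ⟶ b) : Prop :=
  ∀ ⦃Z : C⦄ (h h' : Z ⟶ r.V),
    h ≫ ra.f = h' ≫ ra.f → h ≫ rb.f = h' ≫ rb.f → h = h'

/-- If `C` is finitely complete and a final `F`-coalgebra exists, then for any
bisimulation `a ← r → b` there is a unique monomorphism `f` from the carrier of `r`
into the pullback of the cospan given by the anamorphisms with `r_a = f ≫ p_a` and
`r_b = f ≫ p_b`. -/
theorem bisimulation_factors_through_pullback {C : Type*} [Category C]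
    [HasFiniteLimits C] {F : C ⥤ C} [HasTerminal (Endofunctor.Coalgebra F)]
    {a b r : Endofunctor.Coalgebra F} (ra : r ⟶ a) (rb : r ⟶ b)
    (hbisim : IsBisimulation ra rb) :
    ∃! f : r.V ⟶ pullback (terminal.from a).f (terminal.from b).f,
      Mono f ∧
        ra.f = f ≫ pullback.fst (terminal.from a).f (terminal.from b).f ∧
        rb.f = f ≫ pullback.snd (terminal.from a).f (terminal.from b).f := by
  have hcomm : ra.f ≫ (terminal.from a).f = rb.f ≫ (terminal.from b).f := by
    have h1 : ra ≫ terminal.from a = rb ≫ terminal.from b := Subsingleton.elim _ _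
    exact congrArg Endofunctor.Coalgebra.Hom.f h1
  refine ⟨pullback.lift ra.f rb.f hcomm, ⟨?_, (pullback.lift_fst ra.f rb.f hcomm).symm, (pullback.lift_snd ra.f rb.f hcomm).symm⟩, ?_⟩
  · constructor
    intro Z g h hgh
    apply hbisim
    · have := congrArg (· ≫ pullback.fst (terminal.from a).f (terminal.from b).f) hgh
      simp only [Category.assoc] at this
      exact (congrArg (g ≫ ·) (pullback.lift_fst ra.f rb.f hcomm)).symm.trans
        (this.trans (congrArg (h ≫ ·) (pullback.lift_fst ra.f rb.f hcomm)))
    · have := congrArg (· ≫ pullback.snd (terminal.from a).f (terminal.from b).f) hgh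
      simp only [Category.assoc] at this
      exact (congrArg (g ≫ ·) (pullback.lift_snd ra.f rb.f hcomm)).symm.trans
        (this.trans (congrArg (h ≫ ·) (pullback.lift_snd ra.f rb.f hcomm)))
  · rintro g ⟨-, h1, h2⟩
    apply pullback.hom_ext
    · rw [← h1]; exact (pullback.lift_fst ra.f rb.f hcomm).symm
    · rw [← h2]; exact (pullback.lift_snd ra.f rb.f hcomm).symm
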